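/- arXiv:2512.11658 — 6 statements merged into one kernel-verified Lean document; each statement's English description precedes it below -/
import Mathlib

section
/- Let P ⊆ ℝⁿ be a convex polyhedron given as the intersection of a finite family of closed half-spaces H₁, …, H_l, and let P' be the intersection of all of these half-spaces except H₁ (so P' = H₂ ∩ ⋯ ∩ H_l, with P' = ℝⁿ if l = 1). Then P ⊆ P', and P' is the union of P and the closure of P' \ P. -/
/-- `H` is a closed half-space of `E` determined by a nonzero linear functional. -/
def IsClosedHalfspace {E : Type*} [NormedAddCommGroup E] [NormedSpace ℝ E]
    (H : Set E) : Prop :=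
  ∃ (ℓ : E →ₗ[ℝ] ℝ) (c : ℝ), ℓ ≠ 0 ∧ H = {x | ℓ x ≤ c}

theorem stmt_3 {n l : ℕ} (hl : 1 ≤ l)
    (H : Fin l → Set (EuclideanSpace ℝ (Fin n)))
    (hH : ∀ i, IsClosedHalfspace (H i))
    (P P' : Set (EuclideanSpace ℝ (Fin n)))
    (hP : P = ⋂ i, H i)
    (hP' : P' = ⋂ i ∈ {i : Fin l | i ≠ ⟨0, hl⟩}, H i) :
    P ⊆ P' ∧ P' = P ∪ closure (P' \ P) := by
  have hclosed : ∀ i, IsClosed (H i) := by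
    intro i
    obtain ⟨ℓ, c, -, hEq⟩ := hH i
    rw [hEq]
    exact isClosed_le ℓ.continuous_of_finiteDimensional continuous_const
  have hP'closed : IsClosed P' := by
    rw [hP']
    exact isClosed_biInter fun i _ => hclosed i
  have hsub : P ⊆ P' := by
    rw [hP, hP']
    exact fun x hx => Set.mem_iInter₂.2 fun i _ => Set.mem_iInter.1 hx i
  refine ⟨hsub, Set.Subset.antisymm ?_ ?_⟩
  · intro x hx
    by_cases h : x ∈ P
    · exact Or.inl h
    · exact Or.inr (subset_closure ⟨hx, h⟩)
  · rintro x (hx | hx)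
    · exact hsub hx
    · exact hP'closed.closure_subset (closure_mono Set.diff_subset hx)
end

section
/- Let P ⊆ ℝⁿ be a convex polyhedron, written as an intersection of closed half-spaces H₁ ∩ ⋯ ∩ H_l, and let P₁ = P, P₂ = closure((H₂ ∩ ⋯ ∩ H_l) \ P). Then P₁ and P₂ are convex, P₁ ∪ P₂ = H₂ ∩ ⋯ ∩ H_l is convex, and any segment in P₁ ∪ P₂ is a concatenation of at most one segment in P₁ and at most one segment in P₂. -/
theorem stmt_4 {n l : ℕ} (hl : 1 ≤ l)
    (H : Fin l → Set (EuclideanSpace ℝ (Fin n)))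
    (hH : ∀ i, IsClosedHalfspace (H i))
    (P Q P₁ P₂ : Set (EuclideanSpace ℝ (Fin n)))
    (hP : P = ⋂ i, H i) (hPne : P.Nonempty)
    (hQ : Q = ⋂ i ∈ {i : Fin l | i ≠ ⟨0, hl⟩}, H i)
    (hP₁ : P₁ = P) (hP₂ : P₂ = closure (Q \ P)) :
    Convex ℝ P₁ ∧ Convex ℝ P₂ ∧ P₁ ∪ P₂ = Q ∧ Convex ℝ (P₁ ∪ P₂) ∧
      ∀ x ∈ P₁, ∀ y ∈ P₂, ∃ z ∈ segment ℝ x y,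
        segment ℝ x z ⊆ P₁ ∧ segment ℝ z y ⊆ P₂ := by
  obtain ⟨ℓ, c, hℓ0, hH0⟩ := hH ⟨0, hl⟩
  have hcont : Continuous ℓ := ℓ.continuous_of_finiteDimensional
  have hconv : ∀ i, Convex ℝ (H i) := by
    intro i; obtain ⟨f, d, _, hfd⟩ := hH i
    rw [hfd]; exact convex_halfSpace_le f.isLinear d
  have hclosed : ∀ i, IsClosed (H i) := by
    intro i; obtain ⟨f, d, _, hfd⟩ := hH i
    rw [hfd]; exact isClosed_le f.continuous_of_finiteDimensional continuous_const
  have hPconv : Convex ℝ P := by rw [hP]; exact convex_iInter hconv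
  have hQconv : Convex ℝ Q := by
    rw [hQ]; exact convex_iInter fun i => convex_iInter fun _ => hconv i
  have hQclosed : IsClosed Q := by
    rw [hQ]; exact isClosed_biInter fun i _ => hclosed i
  have hPQ : P = Q ∩ H ⟨0, hl⟩ := by
    rw [hP, hQ]; ext x
    simp only [Set.mem_iInter, Set.mem_inter_iff, Set.mem_setOf_eq]
    constructor
    · exact fun h => ⟨fun i _ => h i, h _⟩
    · rintro ⟨h1, h2⟩ i
      by_cases hi : i = ⟨0, hl⟩
      · rw [hi]; exact h2
      · exact h1 i hi
  have hdiff : Q \ P = Q ∩ {x | c < ℓ x} := by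
    rw [hPQ, hH0]; ext x
    simp only [Set.mem_diff, Set.mem_inter_iff, Set.mem_setOf_eq, not_and, not_le]
    tauto
  have hP₂Q : P₂ ⊆ Q := by
    rw [hP₂]; exact hQclosed.closure_subset_iff.mpr Set.diff_subset
  have hge : ∀ w ∈ P₂, c ≤ ℓ w := by
    intro w hw
    rw [hP₂, hdiff] at hw
    have h1 : w ∈ closure {x | c < ℓ x} := closure_mono Set.inter_subset_right hw
    have h2 : closure {x : EuclideanSpace ℝ (Fin n) | c < ℓ x} ⊆ {x | c ≤ ℓ x} :=
      closure_minimal (Set.setOf_subset_setOf.mpr fun _ => le_of_lt) (isClosed_le continuous_const hcont)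
    exact h2 h1
  have hP₂conv : Convex ℝ P₂ := by
    rw [hP₂, hdiff]
    exact (hQconv.inter (convex_halfSpace_gt ℓ.isLinear c)).closure
  have hunion : P₁ ∪ P₂ = Q := by
    apply Set.Subset.antisymm
    · rintro w (hw | hw)
      · rw [hP₁, hPQ] at hw; exact hw.1
      · exact hP₂Q hw
    · intro w hw
      by_cases hwP : w ∈ P
      · exact Or.inl (hP₁ ▸ hwP)
      · exact Or.inr (hP₂ ▸ subset_closure ⟨hw, hwP⟩)
  refine ⟨hP₁ ▸ hPconv, hP₂conv, hunion, hunion ▸ hQconv, ?_⟩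
  intro x hx y hy
  have hxP : x ∈ P := hP₁ ▸ hx
  have hxQ : x ∈ Q := (hPQ ▸ hxP).1
  have hxc : ℓ x ≤ c := by
    have := (hPQ ▸ hxP).2; rw [hH0] at this; exact this
  have hyQ : y ∈ Q := hP₂Q hy
  have hyc : c ≤ ℓ y := hge y hy
  rcases eq_or_lt_of_le hyc with heq | hlt
  · -- ℓ y = c : take z = y
    refine ⟨y, right_mem_segment _ _ _, ?_, ?_⟩
    · have hyP : y ∈ P := by
        rw [hPQ]; exact ⟨hyQ, by rw [hH0]; exact le_of_eq heq.symm⟩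
      rw [hP₁]; exact hPconv.segment_subset hxP hyP
    · rw [segment_same]; simpa using hy
  · -- c < ℓ y
    have hxy : ℓ x < ℓ y := lt_of_le_of_lt hxc hlt
    have hd : (0:ℝ) < ℓ y - ℓ x := sub_pos.mpr hxy
    set t : ℝ := (c - ℓ x) / (ℓ y - ℓ x) with ht
    have ht0 : 0 ≤ t := div_nonneg (sub_nonneg.mpr hxc) hd.le
    have ht1 : t ≤ 1 := (div_le_one hd).mpr (by linarith)
    set z := (1 - t) • x + t • y with hz
    have hzseg : z ∈ segment ℝ x y := ⟨1 - t, t, by linarith, ht0, by ring, rfl⟩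
    have hzQ : z ∈ Q := hQconv hxQ hyQ (by linarith) ht0 (by ring)
    have hkey : t * (ℓ y - ℓ x) = c - ℓ x := div_mul_cancel₀ _ hd.ne'
    have hℓz : ℓ z = c := by
      have : ℓ z = (1 - t) * ℓ x + t * ℓ y := by
        simp [hz, map_add, map_smul, smul_eq_mul]
      rw [this]; linear_combination hkey
    refine ⟨z, hzseg, ?_, ?_⟩
    · rw [hP₁, hPQ]
      rintro w ⟨a, b, ha, hb, hab, rfl⟩
      refine ⟨hQconv hxQ hzQ ha hb hab, ?_⟩
      rw [hH0]
      simp only [Set.mem_setOf_eq, map_add, map_smul, smul_eq_mul]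
      have h1 : a * ℓ x ≤ a * c := mul_le_mul_of_nonneg_left hxc ha
      rw [hℓz]
      have h2 : a * c + b * c = c := by linear_combination hab * c
      linarith
    · have hopen : openSegment ℝ z y ⊆ Q \ P := by
        rintro w ⟨a, b, ha, hb, hab, rfl⟩
        refine ⟨hQconv hzQ hyQ ha.le hb.le hab, ?_⟩
        intro hwP
        have hwc : ℓ (a • z + b • y) ≤ c := by
          have := (hPQ ▸ hwP).2; rw [hH0] at this; exact this
        have : ℓ (a • z + b • y) = a * ℓ z + b * ℓ y := by
          simp [map_add, map_smul, smul_eq_mul]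
        rw [this, hℓz] at hwc
        have h2 : a * c + b * c = c := by linear_combination hab * c
        have h3 : 0 < b * ℓ y - b * c := by
          have := mul_pos hb (sub_pos.mpr hlt); linarith [this]; 
        linarith
      intro w hw
      rw [hP₂]
      have hcl : segment ℝ z y = closure (openSegment ℝ z y) :=
        (closure_openSegment z y).symm
      exact closure_mono hopen (hcl ▸ hw)
end

section
/- Let (Cᵢ) be an increasing sequence of convex subsets of ℝⁿ, each of which is an intersection of at most N closed half-spaces (for a fixed N). Then the closure of their union is again an intersection of at most N closed half-spaces. -/
/-- `H` is a closed half-space of `ℝⁿ` (we allow the degenerate case `H = ℝⁿ`,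
corresponding to the zero functional). -/
def IsClosedHalfspaceOrUniv {E : Type*} [NormedAddCommGroup E]
    [InnerProductSpace ℝ E] (H : Set E) : Prop :=
  H = Set.univ ∨ ∃ (v : E) (c : ℝ), v ≠ 0 ∧ H = {x | inner ℝ v x ≤ (c : ℝ)}


open Filter Topology Set Module

variable {E : Type*} [NormedAddCommGroup E] [InnerProductSpace ℝ E]

/-- Halfspace with `EReal` bound: `⊤` gives `univ`. -/
def eHalf (v : E) (c : EReal) : Set E := {x | ((inner ℝ v x : ℝ) : EReal) ≤ c}

lemma mem_eHalf {v : E} {c : EReal} {x : E} :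
    x ∈ eHalf v c ↔ ((inner ℝ v x : ℝ) : EReal) ≤ c := Iff.rfl

lemma eHalf_top (v : E) : eHalf v (⊤ : EReal) = univ := by
  ext x; simp [mem_eHalf]

lemma eHalf_coe (v : E) (r : ℝ) : eHalf v (r : EReal) = {x | inner ℝ v x ≤ r} := by
  ext x; simp [mem_eHalf, EReal.coe_le_coe_iff]

lemma isClosed_eHalf (v : E) (c : EReal) : IsClosed (eHalf v c) := by
  have h1 : Continuous fun x : E => ((inner ℝ v x : ℝ) : EReal) :=
    continuous_coe_real_ereal.comp (continuous_const.inner continuous_id)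
  have : eHalf v c = (fun x : E => ((inner ℝ v x : ℝ) : EReal)) ⁻¹' (Iic c) := rfl
  rw [this]
  exact isClosed_Iic.preimage h1

lemma isClosedHalfspaceOrUniv_eHalf {v : E} (hv : ‖v‖ = 1) {c : EReal} (hc : c ≠ ⊥) :
    IsClosedHalfspaceOrUniv (eHalf v c) := by
  induction c with
  | bot => exact absurd rfl hc
  | coe r =>
    right
    refine ⟨v, r, ?_, (eHalf_coe v r)⟩
    intro h0; rw [h0, norm_zero] at hv; norm_num at hv
  | top => left; exact eHalf_top v

/-- every closed-halfspace-or-univ set has a (possibly degenerate) real representation. -/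
lemma rep_of_isClosedHalfspaceOrUniv {H : Set E} (h : IsClosedHalfspaceOrUniv H) :
    ∃ (v : E) (c : ℝ), H = {x | inner ℝ v x ≤ c} := by
  rcases h with h | ⟨v, c, _, rfl⟩
  · exact ⟨0, 0, by ext x; simp [h, inner_zero_left]⟩
  · exact ⟨v, c, rfl⟩

/-- concatenate two families of halfspaces-or-univ and pad with `univ`. -/
lemma concat_pad {N a b : ℕ} (hab : a + b ≤ N) (G : Fin a → Set E) (K : Fin b → Set E)
    (hG : ∀ i, IsClosedHalfspaceOrUniv (G i)) (hK : ∀ i, IsClosedHalfspaceOrUniv (K i))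
    (X : Set E) (hX : X = (⋂ i, G i) ∩ ⋂ i, K i) :
    ∃ H : Fin N → Set E, (∀ j, IsClosedHalfspaceOrUniv (H j)) ∧ X = ⋂ j, H j := by
  classical
  refine ⟨fun j => if h : (j : ℕ) < a then G ⟨j, h⟩ else if h2 : (j : ℕ) - a < b
      then K ⟨(j : ℕ) - a, h2⟩ else univ, fun j => ?_, ?_⟩
  · dsimp only
    split
    · exact hG _
    · split
      · exact hK _
      · exact Or.inl rfl
  · rw [hX]; ext x
    simp only [mem_inter_iff, mem_iInter]
    constructor
    · rintro ⟨h1, h2⟩ j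
      split
      · exact h1 _
      · split
        · exact h2 _
        · trivial
    · intro h
      constructor
      · intro i
        have hiN : (i : ℕ) < N := lt_of_lt_of_le (lt_of_lt_of_le i.2 (Nat.le_add_right a b)) hab
        have := h ⟨(i : ℕ), hiN⟩
        rw [dif_pos i.2] at this
        simpa using this
      · intro i
        have hiN : (a + (i : ℕ)) < N := lt_of_lt_of_le (by omega) hab
        have := h ⟨a + (i : ℕ), hiN⟩
        rw [dif_neg (by simp only [Fin.val_mk]; omega)] at this
        have h2 : ((⟨a + (i : ℕ), hiN⟩ : Fin N) : ℕ) - a < b := by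
          simp only [Fin.val_mk]; omega
        rw [dif_pos h2] at this
        convert this using 2
        apply Fin.ext
        simp only [Fin.val_mk]
        omega

/-- hyperplane as an affine subspace -/
def hyperplaneAS (v : E) (c : ℝ) : AffineSubspace ℝ E where
  carrier := {x | inner ℝ v x = c}
  smul_vsub_vadd_mem' := by
    intro t p1 p2 p3 h1 h2 h3
    simp only [Set.mem_setOf_eq] at *
    simp only [vsub_eq_sub, vadd_eq_add, inner_add_right, real_inner_smul_right,
      inner_sub_right, h1, h2, h3]
    ring

lemma counting [FiniteDimensional ℝ E] (W : Submodule ℝ E) (hW : W ≠ ⊥) {ι : Type*} [Fintype ι]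
    (T : Finset ι) (v : ι → E) (hvW : ∀ j ∈ T, v j ∈ W)
    (hcone : ∀ w : E, (∀ j ∈ T, inner ℝ (v j) w ≤ (0:ℝ)) → w ∈ Wᗮ) :
    finrank ℝ W + 1 ≤ T.card := by
  classical
  by_contra hcard
  push_neg at hcard
  have hcard' : T.card ≤ finrank ℝ W := by omega
  set ψ : W →ₗ[ℝ] ({j // j ∈ T} → ℝ) :=
    LinearMap.pi (fun j => (innerSL ℝ (v j.1)).toLinearMap.comp W.subtype) with hψ
  have hψ_apply : ∀ (w : W) (j : {j // j ∈ T}), ψ w j = inner ℝ (v j.1) (w : E) := by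
    intro w j; rfl
  by_cases hinj : Function.Injective ψ
  · have h1 : finrank ℝ W ≤ finrank ℝ ({j // j ∈ T} → ℝ) :=
      LinearMap.finrank_le_finrank_of_injective hinj
    rw [Module.finrank_fintype_fun_eq_card, Fintype.card_coe] at h1
    have heq : finrank ℝ W = finrank ℝ ({j // j ∈ T} → ℝ) := by
      rw [Module.finrank_fintype_fun_eq_card, Fintype.card_coe]; omega
    have hsurj := (LinearMap.injective_iff_surjective_of_finrank_eq_finrank heq).1 hinj
    obtain ⟨w, hw⟩ := hsurj (fun _ => (-1 : ℝ))
    have hwle : ∀ j ∈ T, inner ℝ (v j) (w : E) ≤ (0:ℝ) := by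
      intro j hj
      have := congrFun hw ⟨j, hj⟩
      rw [hψ_apply] at this
      rw [this]; norm_num
    have hmem := hcone _ hwle
    have hT : T.Nonempty := by
      rw [← Finset.card_pos]
      have hfr : finrank ℝ W ≠ 0 := by
        intro h0; exact hW (Submodule.finrank_eq_zero.1 h0)
      omega
    obtain ⟨j, hj⟩ := hT
    have h0 : inner ℝ (v j) ((w : W) : E) = (0 : ℝ) :=
      (Submodule.mem_orthogonal W (w : E)).1 hmem (v j) (hvW j hj)
    have hm1 := congrFun hw ⟨j, hj⟩
    rw [hψ_apply] at hm1
    rw [h0] at hm1; norm_num at hm1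
  · have hker : LinearMap.ker ψ ≠ ⊥ := by
      intro h; exact hinj (LinearMap.ker_eq_bot.1 h)
    obtain ⟨w, hwker, hw0⟩ := Submodule.exists_mem_ne_zero_of_ne_bot hker
    have hwle : ∀ j ∈ T, inner ℝ (v j) (w : E) ≤ (0:ℝ) := by
      intro j hj
      have := congrFun (LinearMap.mem_ker.1 hwker) ⟨j, hj⟩
      rw [hψ_apply] at this
      simp only [Pi.zero_apply] at this
      rw [this]
    have hmem := hcone _ hwle
    have : inner ℝ ((w:W):E) ((w:W):E) = (0:ℝ) :=
      (Submodule.mem_orthogonal W (w : E)).1 hmem (w : E) w.2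
    rw [inner_self_eq_zero] at this
    exact hw0 (by exact_mod_cast this)
lemma L1 [FiniteDimensional ℝ E] {N : ℕ} (v : Fin N → E) (c : Fin N → ℝ)
    (hne : (⋂ j, {x : E | inner ℝ (v j) x ≤ c j}).Nonempty)
    (hM : affineSpan ℝ (⋂ j, {x : E | inner ℝ (v j) x ≤ c j}) ≠ ⊤) :
    ∃ S : Finset (Fin N),
      S.card + (finrank ℝ ((affineSpan ℝ (⋂ j, {x : E | inner ℝ (v j) x ≤ c j})).directionᗮ) + 1) ≤ N ∧
      (⋂ j, {x : E | inner ℝ (v j) x ≤ c j}) =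
        ↑(affineSpan ℝ (⋂ j, {x : E | inner ℝ (v j) x ≤ c j})) ∩
          ⋂ j ∈ S, {x : E | inner ℝ (v j) x ≤ c j} := by
  classical
  set C := ⋂ j, {x : E | inner ℝ (v j) x ≤ c j} with hC
  set M := affineSpan ℝ C with hMdef
  set W := M.directionᗮ with hW
  have hCsub : ∀ (j) (x), x ∈ C → inner ℝ (v j) x ≤ c j := by
    intro j x hx; exact Set.mem_iInter.1 hx j
  have hMne : (M : Set E).Nonempty := hne.mono (subset_affineSpan ℝ C)
  have hWne : W ≠ ⊥ := by
    intro h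
    have : M.direction = ⊤ := Submodule.orthogonal_eq_bot_iff.1 h
    exact hM ((AffineSubspace.direction_eq_top_iff_of_nonempty hMne).1 this)
  set T : Finset (Fin N) := Finset.univ.filter (fun j => ∀ x ∈ C, inner ℝ (v j) x = c j) with hT
  have hTmem : ∀ j, j ∈ T ↔ ∀ x ∈ C, inner ℝ (v j) x = c j := by
    intro j; simp [hT]
  have hvW : ∀ j ∈ T, v j ∈ W := by
    intro j hj
    have hle : M.direction ≤ (Submodule.span ℝ {v j})ᗮ := by
      rw [hMdef, direction_affineSpan, vectorSpan_def]
      rw [Submodule.span_le]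
      rintro u ⟨x, hx, y, hy, rfl⟩
      rw [SetLike.mem_coe, Submodule.mem_orthogonal_singleton_iff_inner_right]
      have hx' := (hTmem j).1 hj x hx
      have hy' := (hTmem j).1 hj y hy
      simp [vsub_eq_sub, inner_sub_right, hx', hy']
    have h2 : (Submodule.span ℝ {v j})ᗮᗮ ≤ M.directionᗮ := Submodule.orthogonal_le hle
    exact h2 (Submodule.le_orthogonal_orthogonal _ (Submodule.mem_span_singleton_self (v j)))
  -- strict witnesses off T
  have hstrict : ∀ j ∉ T, ∃ x ∈ C, inner ℝ (v j) x < c j := by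
    intro j hj
    rw [hTmem] at hj
    push_neg at hj
    obtain ⟨x, hx, hxne⟩ := hj
    exact ⟨x, hx, lt_of_le_of_ne (hCsub j x hx) hxne⟩
  have hconvC : Convex ℝ C := by
    apply convex_iInter
    intro j
    exact convex_halfSpace_le ⟨fun a b => inner_add_right _ _ _, fun r a => real_inner_smul_right _ _ r⟩ (c j)
  -- a point of C strict for all j ∉ T
  obtain ⟨x₀, hx₀, h0⟩ : ∃ x₀ ∈ C, ∀ j ∉ T, inner ℝ (v j) x₀ < c j := by
    rcases Finset.eq_empty_or_nonempty Tᶜ with hSe | hSne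
    · refine ⟨hne.choose, hne.choose_spec, fun j hj => ?_⟩
      exact absurd (Finset.mem_compl.2 hj) (by rw [hSe]; exact Finset.notMem_empty j)
    · set xw : Fin N → E := fun j => if h : j ∉ T then (hstrict j h).choose else hne.choose with hxw
      have hxwC : ∀ j, xw j ∈ C := by
        intro j; rw [hxw]; dsimp only
        split
        · exact (hstrict j (by assumption)).choose_spec.1
        · exact hne.choose_spec
      have hxwlt : ∀ j ∉ T, inner ℝ (v j) (xw j) < c j := by
        intro j hj; rw [hxw]; dsimp only
        rw [dif_pos hj]
        exact (hstrict j hj).choose_spec.2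
      have hcardpos : (0:ℝ) < (Tᶜ.card : ℝ) := by
        exact_mod_cast Finset.card_pos.2 hSne
      refine ⟨∑ j ∈ Tᶜ, ((Tᶜ.card : ℝ))⁻¹ • xw j, ?_, ?_⟩
      · apply hconvC.sum_mem
        · intro i _; positivity
        · rw [Finset.sum_const, nsmul_eq_mul]; field_simp
        · intro i _; exact hxwC i
      · intro j hj
        rw [inner_sum]
        have hlt : ∑ i ∈ Tᶜ, inner ℝ (v j) (((Tᶜ.card : ℝ))⁻¹ • xw i) <
            ∑ _i ∈ Tᶜ, ((Tᶜ.card : ℝ))⁻¹ * c j := by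
          apply Finset.sum_lt_sum
          · intro i _
            rw [real_inner_smul_right]
            have := hCsub j (xw i) (hxwC i)
            have hpos : (0:ℝ) < ((Tᶜ.card : ℝ))⁻¹ := by positivity
            nlinarith
          · refine ⟨j, Finset.mem_compl.2 hj, ?_⟩
            rw [real_inner_smul_right]
            have := hxwlt j hj
            have hpos : (0:ℝ) < ((Tᶜ.card : ℝ))⁻¹ := by positivity
            nlinarith
        calc ∑ i ∈ Tᶜ, inner ℝ (v j) (((Tᶜ.card : ℝ))⁻¹ • xw i)
            < ∑ _i ∈ Tᶜ, ((Tᶜ.card : ℝ))⁻¹ * c j := hlt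
          _ = c j := by rw [Finset.sum_const, nsmul_eq_mul]; field_simp
  -- the cone condition
  have hcone : ∀ w : E, (∀ j ∈ T, inner ℝ (v j) w ≤ (0:ℝ)) → w ∈ Wᗮ := by
    intro w hw
    rw [hW, Submodule.orthogonal_orthogonal]
    have hev : ∀ᶠ ε in 𝓝[>] (0:ℝ), ∀ j, inner ℝ (v j) (x₀ + ε • w) ≤ c j := by
      rw [eventually_all]
      intro j
      by_cases hj : j ∈ T
      · filter_upwards [self_mem_nhdsWithin] with ε hε
        rw [inner_add_right, real_inner_smul_right]
        have h1 := hw j hj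
        have h2 := (hTmem j).1 hj x₀ hx₀
        have h3 : (0:ℝ) < ε := hε
        nlinarith
      · have hlt := h0 j hj
        have htend : Tendsto (fun ε : ℝ => inner ℝ (v j) x₀ + ε * inner ℝ (v j) w) (𝓝[>] 0)
            (𝓝 (inner ℝ (v j) x₀)) := by
          have : Tendsto (fun ε : ℝ => inner ℝ (v j) x₀ + ε * inner ℝ (v j) w) (𝓝 0)
              (𝓝 (inner ℝ (v j) x₀ + 0 * inner ℝ (v j) w)) := by
            exact (continuous_const.add (continuous_id.mul continuous_const)).tendsto 0
          rw [zero_mul, add_zero] at this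
          exact this.mono_left nhdsWithin_le_nhds
        filter_upwards [htend (Iio_mem_nhds hlt)] with ε hε
        rw [inner_add_right, real_inner_smul_right]
        exact le_of_lt hε
    obtain ⟨ε, hP, hε0⟩ := (hev.and self_mem_nhdsWithin).exists
    have hε0' : (0:ℝ) < ε := hε0
    have hxC : x₀ + ε • w ∈ C := Set.mem_iInter.2 hP
    have hdir : (x₀ + ε • w) -ᵥ x₀ ∈ M.direction :=
      AffineSubspace.vsub_mem_direction (subset_affineSpan ℝ C hxC) (subset_affineSpan ℝ C hx₀)
    have heq : (x₀ + ε • w) -ᵥ x₀ = ε • w := by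
      rw [vsub_eq_sub]; abel
    rw [heq] at hdir
    have := M.direction.smul_mem ε⁻¹ hdir
    rwa [smul_smul, inv_mul_cancel₀ hε0'.ne', one_smul] at this
  have hTcard := counting W hWne T v hvW hcone
  refine ⟨Tᶜ, ?_, ?_⟩
  · have h1 : Tᶜ.card = Fintype.card (Fin N) - T.card := Finset.card_compl T
    have h2 : T.card ≤ Fintype.card (Fin N) := Finset.card_le_univ T
    rw [Fintype.card_fin] at h1 h2
    omega
  · ext x
    constructor
    · intro hx
      exact ⟨subset_affineSpan ℝ C hx, Set.mem_iInter₂.2 fun j _ => hCsub j x hx⟩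
    · rintro ⟨hxM, hxS⟩
      apply Set.mem_iInter.2
      intro j
      by_cases hj : j ∈ T
      · have hle : M ≤ hyperplaneAS (v j) (c j) := by
          rw [hMdef]
          rw [affineSpan_le]
          intro y hy
          exact (hTmem j).1 hj y hy
        exact le_of_eq (hle hxM)
      · exact Set.mem_iInter₂.1 hxS j (Finset.mem_compl.2 hj)
lemma L2 [FiniteDimensional ℝ E] (M : AffineSubspace ℝ E) (hMne : (M : Set E).Nonempty) :
    ∃ G : Fin (finrank ℝ (M.directionᗮ) + 1) → Set E,
      (∀ i, IsClosedHalfspaceOrUniv (G i)) ∧ (⋂ i, G i) = (M : Set E) := by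
  classical
  set Q := M.directionᗮ with hQ
  by_cases hbot : Q = ⊥
  · have hMtop : M = ⊤ := by
      have : M.direction = ⊤ := Submodule.orthogonal_eq_bot_iff.1 hbot
      exact (AffineSubspace.direction_eq_top_iff_of_nonempty hMne).1 this
    refine ⟨fun _ => Set.univ, fun _ => Or.inl rfl, ?_⟩
    rw [hMtop]
    simp
  · set m := finrank ℝ Q with hm
    have hm1 : 1 ≤ m := by
      rcases Nat.eq_zero_or_pos m with h | h
      · rw [hm] at h
        exact absurd (Submodule.finrank_eq_zero.1 h) hbot
      · exact h
    obtain ⟨p, hp⟩ := hMne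
    set b : Basis (Fin m) ℝ Q := Module.finBasis ℝ Q with hb
    set w : Fin m → E := fun i => ((b i : Q) : E) with hwdef
    have hw0 : ∀ i, w i ≠ 0 := by
      intro i h
      have : (b i : Q) = 0 := by
        apply Subtype.ext
        exact h
      exact b.ne_zero i this
    have hsum0 : (∑ i, w i) ≠ 0 := by
      intro h
      have h2 : (∑ i, b i) = (0 : Q) := by
        have : ((∑ i, b i : Q) : E) = 0 := by
          rw [← h, hwdef]; push_cast; rfl
        exact_mod_cast this
      have h3 := Fintype.linearIndependent_iff.1 b.linearIndependent (fun _ => (1:ℝ))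
      have h4 : ∑ i, (1:ℝ) • b i = 0 := by simpa using h2
      have := h3 h4 ⟨0, hm1⟩
      norm_num at this
    -- key characterization
    have hkey : ∀ x : E, (∀ i, inner ℝ (w i) (x - p) = (0:ℝ)) ↔ x ∈ M := by
      intro x
      constructor
      · intro h
        have horth : x - p ∈ Qᗮ := by
          rw [Submodule.mem_orthogonal]
          intro u hu
          set f : Q →ₗ[ℝ] ℝ := (innerSL ℝ (x - p)).toLinearMap.comp Q.subtype with hf
          have : f = 0 := by
            apply b.ext
            intro i
            have := h i
            simp only [hf, LinearMap.comp_apply, Submodule.subtype_apply,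
              ContinuousLinearMap.coe_coe, innerSL_apply_apply, LinearMap.zero_apply]
            rw [real_inner_comm]
            exact this
          have h5 := congrArg (fun g => g ⟨u, hu⟩) this
          simp only [hf, LinearMap.comp_apply, Submodule.subtype_apply,
            ContinuousLinearMap.coe_coe, innerSL_apply_apply, LinearMap.zero_apply] at h5
          rw [real_inner_comm]
          exact h5
        rw [hQ, Submodule.orthogonal_orthogonal] at horth
        have := (AffineSubspace.vsub_right_mem_direction_iff_mem hp x).1 (by rwa [vsub_eq_sub])
        exact this
      · intro hx i
        have hdir : x - p ∈ M.direction := by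
          have := AffineSubspace.vsub_mem_direction hx hp
          rwa [vsub_eq_sub] at this
        have : w i ∈ M.directionᗮ := (b i).2
        exact (Submodule.mem_orthogonal' _ _).1 ((hQ ▸ this : w i ∈ M.directionᗮ)) _ hdir
    refine ⟨fun i => if h : (i : ℕ) < m then {x | (inner ℝ (w ⟨i, h⟩) x : ℝ) ≤ inner ℝ (w ⟨i, h⟩) p}
        else {x | (inner ℝ (-(∑ i, w i)) x : ℝ) ≤ inner ℝ (-(∑ i, w i)) p}, ?_, ?_⟩
    · intro i
      dsimp only
      split
      · exact Or.inr ⟨_, _, hw0 _, rfl⟩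
      · exact Or.inr ⟨_, _, neg_ne_zero.2 hsum0, rfl⟩
    · ext x
      simp only [Set.mem_iInter, SetLike.mem_coe]
      rw [← hkey x]
      constructor
      · intro h
        have hle : ∀ i : Fin m, inner ℝ (w i) (x - p) ≤ (0:ℝ) := by
          intro i
          have h2 := h ⟨(i : ℕ), by omega⟩
          rw [dif_pos (show ((⟨(i : ℕ), by omega⟩ : Fin (m+1)) : ℕ) < m from i.2)] at h2
          simp only [Fin.eta, Set.mem_setOf_eq] at h2
          rw [inner_sub_right]; linarith
        have hge : (0:ℝ) ≤ ∑ i, inner ℝ (w i) (x - p) := by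
          have h2 := h ⟨m, by omega⟩
          rw [dif_neg (by simp)] at h2
          simp only [Set.mem_setOf_eq, inner_neg_left, neg_le_neg_iff] at h2
          have h3 : (0:ℝ) ≤ inner ℝ (∑ i, w i) (x - p) := by
            rw [inner_sub_right]; linarith
          rw [sum_inner] at h3
          exact h3
        have hsum : ∑ i, inner ℝ (w i) (x - p) = (0:ℝ) :=
          le_antisymm (Finset.sum_nonpos (fun i _ => hle i)) hge
        intro i
        exact (Finset.sum_eq_zero_iff_of_nonpos (fun i _ => hle i)).1 hsum i (Finset.mem_univ i)
      · intro h i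
        split
        · next hi =>
          simp only [Set.mem_setOf_eq]
          have h2 := h ⟨(i : ℕ), hi⟩
          rw [inner_sub_right] at h2
          linarith
        · simp only [Set.mem_setOf_eq, inner_neg_left, neg_le_neg_iff]
          have h2 : inner ℝ (∑ i, w i) (x - p) = (0:ℝ) := by
            rw [sum_inner]
            exact Finset.sum_eq_zero (fun i _ => h i)
          rw [inner_sub_right] at h2
          linarith
lemma exists_normalize [FiniteDimensional ℝ E] (M : AffineSubspace ℝ E) {p : E} (hp : p ∈ M)
    {u : E} (hu : u ∈ M.direction) (hu1 : ‖u‖ = 1) (v : E) (c : ℝ)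
    (hne : ((M : Set E) ∩ {x | inner ℝ v x ≤ c}).Nonempty) :
    ∃ (v' : E) (c' : EReal), ‖v'‖ = 1 ∧ v' ∈ M.direction ∧
      (M : Set E) ∩ {x | inner ℝ v x ≤ c} = (M : Set E) ∩ eHalf v' c' := by
  classical
  set v₁ : E := ((M.direction.orthogonalProjection v : M.direction) : E) with hv₁
  have hv₁mem : v₁ ∈ M.direction := (M.direction.orthogonalProjection v).2
  have hkey : ∀ x ∈ M, (inner ℝ v x : ℝ) = inner ℝ v₁ x + inner ℝ (v - v₁) p := by
    intro x hx
    have hxp : x - p ∈ M.direction := by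
      have := AffineSubspace.vsub_mem_direction hx hp
      rwa [vsub_eq_sub] at this
    have horth : v - v₁ ∈ M.directionᗮ := Submodule.sub_starProjection_mem_orthogonal (K := M.direction) v
    have h0 : (inner ℝ (v - v₁) (x - p) : ℝ) = 0 :=
      (Submodule.mem_orthogonal' _ _).1 horth _ hxp
    simp only [inner_sub_left, inner_sub_right] at h0 ⊢
    linarith
  by_cases h0 : v₁ = 0
  · have hc : inner ℝ (v - v₁) p ≤ c := by
      obtain ⟨y, hyM, hy⟩ := hne
      have h1 := hkey y hyM
      have hz : (inner ℝ v₁ y : ℝ) = 0 := by rw [h0, inner_zero_left]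
      simp only [Set.mem_setOf_eq] at hy
      linarith
    refine ⟨u, ⊤, hu1, hu, ?_⟩
    rw [eHalf_top, Set.inter_univ]
    ext x
    simp only [Set.mem_inter_iff, Set.mem_setOf_eq, SetLike.mem_coe]
    constructor
    · exact fun h => h.1
    · intro hx
      refine ⟨hx, ?_⟩
      have h1 := hkey x hx
      have hz : (inner ℝ v₁ x : ℝ) = 0 := by rw [h0, inner_zero_left]
      linarith
  · have hpos : (0:ℝ) < ‖v₁‖ := norm_pos_iff.mpr h0
    refine ⟨‖v₁‖⁻¹ • v₁, (((c - inner ℝ (v - v₁) p) / ‖v₁‖ : ℝ) : EReal), ?_,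
      M.direction.smul_mem _ hv₁mem, ?_⟩
    · rw [norm_smul, norm_inv, norm_norm, inv_mul_cancel₀ hpos.ne']
    · ext x
      simp only [Set.mem_inter_iff, Set.mem_setOf_eq, SetLike.mem_coe, mem_eHalf]
      constructor
      · rintro ⟨hx, hvx⟩
        refine ⟨hx, ?_⟩
        rw [EReal.coe_le_coe_iff, real_inner_smul_left]
        have h1 := hkey x hx
        rw [div_eq_inv_mul]
        have : (inner ℝ v₁ x : ℝ) ≤ c - inner ℝ (v - v₁) p := by linarith
        have hip : (0:ℝ) < ‖v₁‖⁻¹ := by positivity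
        nlinarith
      · rintro ⟨hx, hvx⟩
        refine ⟨hx, ?_⟩
        rw [EReal.coe_le_coe_iff, real_inner_smul_left, div_eq_inv_mul] at hvx
        have h1 := hkey x hx
        have hip : (0:ℝ) < ‖v₁‖⁻¹ := by positivity
        have h2 : (inner ℝ v₁ x : ℝ) ≤ c - inner ℝ (v - v₁) p := by
          nlinarith
        linarith
lemma convex_eHalf (v : E) (c : EReal) : Convex ℝ (eHalf v c) := by
  induction c with
  | bot =>
    have : eHalf v ⊥ = ∅ := by
      ext x; simp [mem_eHalf]
    rw [this]; exact convex_empty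
  | coe r =>
    rw [eHalf_coe]
    exact convex_halfSpace_le
      ⟨fun a b => inner_add_right _ _ _, fun r a => real_inner_smul_right _ _ r⟩ r
  | top => rw [eHalf_top]; exact convex_univ

lemma core [FiniteDimensional ℝ E] {N' : ℕ} (M : AffineSubspace ℝ E)
    (D : ℕ → Set E) (hmono : Monotone D) (hne : (D 0).Nonempty)
    (hspan : affineSpan ℝ (⋃ k, D k) = M)
    (v : ℕ → Fin N' → E) (c : ℕ → Fin N' → EReal)
    (hv1 : ∀ k j, ‖v k j‖ = 1) (hvM : ∀ k j, v k j ∈ M.direction)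
    (hD : ∀ k, D k = (M : Set E) ∩ ⋂ j, eHalf (v k j) (c k j)) :
    ∃ (w : Fin N' → E) (γ : Fin N' → EReal), (∀ j, ‖w j‖ = 1) ∧ (∀ j, γ j ≠ ⊥) ∧
      closure (⋃ k, D k) = (M : Set E) ∩ ⋂ j, eHalf (w j) (γ j) := by
  classical
  set U := ⋃ k, D k with hU
  have hDM : ∀ k, D k ⊆ (M : Set E) := fun k => by rw [hD k]; exact Set.inter_subset_left
  have hUM : U ⊆ (M : Set E) := Set.iUnion_subset hDM
  have hDconv : ∀ k, Convex ℝ (D k) := by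
    intro k; rw [hD k]
    exact (AffineSubspace.convex M).inter (convex_iInter fun j => convex_eHalf _ _)
  -- compactness: extract a convergent subsequence of the constraint data
  set F : ℕ → (Fin N' → E × EReal) := fun k j => (v k j, c k j) with hF
  have hKcpt : IsCompact (Set.univ.pi fun _ : Fin N' =>
      ((Metric.sphere (0:E) 1 ∩ (M.direction : Set E)) ×ˢ (Set.univ : Set EReal))) := by
    apply isCompact_univ_pi
    intro _
    exact ((isCompact_sphere 0 1).inter_right (Submodule.closed_of_finiteDimensional _)).prod
      isCompact_univ
  have hFK : ∀ k, F k ∈ Set.univ.pi fun _ : Fin N' =>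
      ((Metric.sphere (0:E) 1 ∩ (M.direction : Set E)) ×ˢ (Set.univ : Set EReal)) := by
    intro k
    rw [Set.mem_univ_pi]
    intro j
    refine ⟨⟨?_, hvM k j⟩, Set.mem_univ _⟩
    rw [mem_sphere_zero_iff_norm]
    exact hv1 k j
  obtain ⟨L, hLK, φ, hφ, hconv⟩ := hKcpt.tendsto_subseq hFK
  set w : Fin N' → E := fun j => (L j).1 with hw
  set γ : Fin N' → EReal := fun j => (L j).2 with hγ
  have hLj : ∀ j, (L j).1 ∈ Metric.sphere (0:E) 1 ∩ (M.direction : Set E) := by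
    intro j
    exact ((Set.mem_univ_pi.1 hLK) j).1
  have hw1 : ∀ j, ‖w j‖ = 1 := by
    intro j
    have := (hLj j).1
    rwa [mem_sphere_zero_iff_norm] at this
  have hwM : ∀ j, w j ∈ M.direction := fun j => (hLj j).2
  have hconvj : ∀ j, Tendsto (fun l => F (φ l) j) atTop (𝓝 (L j)) := by
    intro j
    exact ((continuous_apply j).tendsto L).comp hconv
  have hvt : ∀ j, Tendsto (fun l => v (φ l) j) atTop (𝓝 (w j)) := by
    intro j
    exact (continuous_fst.tendsto (L j)).comp (hconvj j)
  have hct : ∀ j, Tendsto (fun l => c (φ l) j) atTop (𝓝 (γ j)) := by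
    intro j
    exact (continuous_snd.tendsto (L j)).comp (hconvj j)
  -- inclusion of U in the limit polyhedron
  have hUsub : U ⊆ (M : Set E) ∩ ⋂ j, eHalf (w j) (γ j) := by
    intro x hx
    obtain ⟨k, hk⟩ := Set.mem_iUnion.1 hx
    refine ⟨hUM hx, Set.mem_iInter.2 fun j => ?_⟩
    have hev : ∀ᶠ l in atTop, ((inner ℝ (v (φ l) j) x : ℝ) : EReal) ≤ c (φ l) j := by
      filter_upwards [eventually_ge_atTop k] with l hl
      have hxl : x ∈ D (φ l) := hmono (le_trans hl (hφ.le_apply)) hk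
      rw [hD] at hxl
      exact Set.mem_iInter.1 hxl.2 j
    have hL1 : Tendsto (fun l => ((inner ℝ (v (φ l) j) x : ℝ) : EReal)) atTop
        (𝓝 ((inner ℝ (w j) x : ℝ) : EReal)) := by
      apply (continuous_coe_real_ereal.tendsto _).comp
      exact ((continuous_id.inner continuous_const).tendsto (w j)).comp (hvt j)
    exact le_of_tendsto_of_tendsto hL1 (hct j) hev
  have hγbot : ∀ j, γ j ≠ ⊥ := by
    intro j hbot
    obtain ⟨u₀, hu₀⟩ := hne
    have := Set.mem_iInter.1 (hUsub (Set.mem_iUnion.2 ⟨0, hu₀⟩)).2 j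
    rw [mem_eHalf, hbot, le_bot_iff] at this
    exact EReal.coe_ne_bot _ this
  have hUle : ∀ j, ∀ x ∈ U, ((inner ℝ (w j) x : ℝ) : EReal) ≤ γ j := by
    intro j x hx
    exact Set.mem_iInter.1 (hUsub hx).2 j
  -- Slater point
  have hwit : ∀ j, γ j ≠ ⊤ → ∃ x ∈ U, (inner ℝ (w j) x : ℝ) < (γ j).toReal := by
    intro j hj
    by_contra hcon
    push_neg at hcon
    have hall : ∀ x ∈ U, (inner ℝ (w j) x : ℝ) = (γ j).toReal := by
      intro x hx
      refine le_antisymm ?_ (hcon x hx)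
      have := hUle j x hx
      rw [show γ j = (((γ j).toReal : ℝ) : EReal) from (EReal.coe_toReal hj (hγbot j)).symm,
        EReal.coe_le_coe_iff] at this
      exact this
    have hle : M.direction ≤ (Submodule.span ℝ {w j})ᗮ := by
      rw [← hspan, direction_affineSpan, vectorSpan_def]
      rw [Submodule.span_le]
      rintro u ⟨a, ha, b, hb, rfl⟩
      rw [SetLike.mem_coe, Submodule.mem_orthogonal_singleton_iff_inner_right]
      have ha' := hall a ha
      have hb' := hall b hb
      simp [vsub_eq_sub, inner_sub_right, ha', hb']
    have : (inner ℝ (w j) (w j) : ℝ) = 0 := by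
      have := hle (hwM j)
      rwa [Submodule.mem_orthogonal_singleton_iff_inner_right] at this
    rw [inner_self_eq_zero] at this
    have h1 := hw1 j
    rw [this, norm_zero] at h1
    exact one_ne_zero h1.symm
  obtain ⟨z, hzU, hz⟩ : ∃ z ∈ U, ∀ j, γ j ≠ ⊤ → (inner ℝ (w j) z : ℝ) < (γ j).toReal := by
    set Jf : Finset (Fin N') := Finset.univ.filter (fun j => γ j ≠ ⊤) with hJf
    have hJmem : ∀ j, j ∈ Jf ↔ γ j ≠ ⊤ := by intro j; simp [hJf]
    have hwit' : ∀ j, ∃ xk : E × ℕ, xk.1 ∈ D xk.2 ∧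
        (γ j ≠ ⊤ → (inner ℝ (w j) xk.1 : ℝ) < (γ j).toReal) := by
      intro j
      by_cases hj : γ j ≠ ⊤
      · obtain ⟨x, hx, hlt⟩ := hwit j hj
        obtain ⟨k, hk⟩ := Set.mem_iUnion.1 hx
        exact ⟨(x, k), hk, fun _ => hlt⟩
      · exact ⟨(hne.choose, 0), hne.choose_spec, fun h' => absurd h' hj⟩
    choose xk hxkD hxklt using hwit'
    rcases Finset.eq_empty_or_nonempty Jf with hJe | hJne
    · refine ⟨hne.choose, Set.mem_iUnion.2 ⟨0, hne.choose_spec⟩, fun j hj => ?_⟩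
      exact absurd ((hJmem j).2 hj) (by rw [hJe]; exact Finset.notMem_empty j)
    · set K₀ := Finset.univ.sup fun j => (xk j).2 with hK₀
      have hxkK : ∀ j, (xk j).1 ∈ D K₀ := by
        intro j
        exact hmono (Finset.le_sup (Finset.mem_univ j)) (hxkD j)
      have hcardpos : (0:ℝ) < (Jf.card : ℝ) := by exact_mod_cast Finset.card_pos.2 hJne
      refine ⟨∑ j ∈ Jf, ((Jf.card : ℝ))⁻¹ • (xk j).1, ?_, ?_⟩
      · apply Set.mem_iUnion.2 ⟨K₀, ?_⟩
        apply (hDconv K₀).sum_mem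
        · intro i _; exact (inv_pos.2 hcardpos).le
        · rw [Finset.sum_const, nsmul_eq_mul]; exact mul_inv_cancel₀ hcardpos.ne'
        · intro i _; exact hxkK i
      · intro j hj
        rw [inner_sum]
        have hlt : ∑ i ∈ Jf, inner ℝ (w j) (((Jf.card : ℝ))⁻¹ • (xk i).1) <
            ∑ _i ∈ Jf, ((Jf.card : ℝ))⁻¹ * (γ j).toReal := by
          apply Finset.sum_lt_sum
          · intro i _
            rw [real_inner_smul_right]
            have hle : (inner ℝ (w j) (xk i).1 : ℝ) ≤ (γ j).toReal := by
              have := hUle j _ (Set.mem_iUnion.2 ⟨(xk i).2, hxkD i⟩)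
              rwa [show γ j = (((γ j).toReal : ℝ) : EReal) from
                (EReal.coe_toReal hj (hγbot j)).symm,
                EReal.coe_le_coe_iff] at this
            have hpos : (0:ℝ) < ((Jf.card : ℝ))⁻¹ := inv_pos.2 hcardpos
            nlinarith
          · refine ⟨j, (hJmem j).2 hj, ?_⟩
            rw [real_inner_smul_right]
            have := hxklt j hj
            have hpos : (0:ℝ) < ((Jf.card : ℝ))⁻¹ := inv_pos.2 hcardpos
            nlinarith
        calc ∑ i ∈ Jf, inner ℝ (w j) (((Jf.card : ℝ))⁻¹ • (xk i).1)
            < ∑ _i ∈ Jf, ((Jf.card : ℝ))⁻¹ * (γ j).toReal := hlt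
          _ = (γ j).toReal := by rw [Finset.sum_const, nsmul_eq_mul, ← mul_assoc, mul_inv_cancel₀ hcardpos.ne', one_mul]
  have hzM : z ∈ (M : Set E) := hUM hzU
  refine ⟨w, γ, hw1, hγbot, ?_⟩
  apply subset_antisymm
  · apply closure_minimal hUsub
    exact ((AffineSubspace.closed_of_finiteDimensional M).inter
      (isClosed_iInter fun j => isClosed_eHalf _ _))
  · rintro x ⟨hxM, hx⟩
    -- approximate x by points on the segment towards z
    have hxt : ∀ t : ℝ, 0 < t → t ≤ 1 → (x + t • (z - x)) ∈ U := by
      intro t ht0 ht1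
      set y := x + t • (z - x) with hy
      have hyM : y ∈ M := by
        have := M.smul_vsub_vadd_mem t hzM hxM hxM
        rw [vsub_eq_sub, vadd_eq_add] at this
        rwa [hy, add_comm]
      have hkey : ∀ j, ∀ᶠ l in atTop, y ∈ eHalf (v (φ l) j) (c (φ l) j) := by
        intro j
        have hyval : (inner ℝ (w j) y : ℝ) = (1 - t) * inner ℝ (w j) x + t * inner ℝ (w j) z := by
          rw [hy]
          simp only [inner_add_right, inner_sub_right, real_inner_smul_right]
          ring
        have hstrict : ((inner ℝ (w j) y : ℝ) : EReal) < γ j := by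
          by_cases hj : γ j = ⊤
          · rw [hj]; exact EReal.coe_lt_top _
          · have hγr : γ j = (((γ j).toReal : ℝ) : EReal) := (EReal.coe_toReal hj (hγbot j)).symm
            rw [hγr, EReal.coe_lt_coe_iff]
            have h1 : (inner ℝ (w j) x : ℝ) ≤ (γ j).toReal := by
              have := Set.mem_iInter.1 hx j
              rwa [mem_eHalf, hγr, EReal.coe_le_coe_iff] at this
            have h2 := hz j hj
            rw [hyval]; nlinarith
        obtain ⟨b, hb1, hb2⟩ := exists_between hstrict
        have hbtop : b ≠ ⊤ := by
          intro h; rw [h] at hb2; exact absurd hb2 (not_top_lt)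
        have hbbot : b ≠ ⊥ := by
          intro h; rw [h] at hb1; exact absurd hb1 (not_lt_bot)
        have hbr : b = ((b.toReal : ℝ) : EReal) := (EReal.coe_toReal hbtop hbbot).symm
        have hvy : Tendsto (fun l => (inner ℝ (v (φ l) j) y : ℝ)) atTop (𝓝 (inner ℝ (w j) y)) :=
          ((continuous_id.inner continuous_const).tendsto (w j)).comp (hvt j)
        have hev1 : ∀ᶠ l in atTop, (inner ℝ (v (φ l) j) y : ℝ) < b.toReal := by
          have hlt : (inner ℝ (w j) y : ℝ) < b.toReal := by
            rw [hbr, EReal.coe_lt_coe_iff] at hb1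
            exact hb1
          exact hvy (Iio_mem_nhds hlt)
        have hev2 : ∀ᶠ l in atTop, ((b.toReal : ℝ) : EReal) < c (φ l) j := by
          apply (hct j)
          apply Ioi_mem_nhds
          rwa [← hbr]
        filter_upwards [hev1, hev2] with l h1 h2
        rw [mem_eHalf]
        exact le_trans (EReal.coe_le_coe_iff.2 h1.le) h2.le
      have hall : ∀ᶠ l in atTop, ∀ j, y ∈ eHalf (v (φ l) j) (c (φ l) j) :=
        eventually_all.2 hkey
      obtain ⟨l, hl⟩ := hall.exists
      exact Set.mem_iUnion.2 ⟨φ l, by rw [hD]; exact ⟨hyM, Set.mem_iInter.2 hl⟩⟩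
    have htend : Tendsto (fun m : ℕ => x + (1/((m:ℝ)+1)) • (z - x)) atTop (𝓝 x) := by
      have h1 : Tendsto (fun m : ℕ => (1/((m:ℝ)+1))) atTop (𝓝 0) :=
        tendsto_one_div_add_atTop_nhds_zero_nat
      have h2 := h1.smul_const (z - x)
      rw [zero_smul] at h2
      have h3 := h2.const_add x
      rwa [add_zero] at h3
    apply mem_closure_of_tendsto htend
    apply Filter.Eventually.of_forall
    intro m
    apply hxt
    · positivity
    · rw [div_le_one (by positivity)]
      have : (0:ℝ) ≤ (m:ℝ) := Nat.cast_nonneg m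
      linarith
lemma enum_normalize [FiniteDimensional ℝ E] {N N' : ℕ} (M : AffineSubspace ℝ E) {p : E}
    (hp : p ∈ M) {u : E} (hu : u ∈ M.direction) (hu1 : ‖u‖ = 1)
    (vv : Fin N → E) (cc : Fin N → ℝ) (S : Finset (Fin N)) (hcard : S.card ≤ N')
    (X : Set E) (hX : X = (M : Set E) ∩ ⋂ j ∈ S, {x | inner ℝ (vv j) x ≤ cc j})
    (hne : X.Nonempty) :
    ∃ (v : Fin N' → E) (c : Fin N' → EReal), (∀ j, ‖v j‖ = 1) ∧ (∀ j, v j ∈ M.direction) ∧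
      X = (M : Set E) ∩ ⋂ j, eHalf (v j) (c j) := by
  classical
  have hnorm : ∀ j : Fin N, ∃ (v' : E) (c' : EReal), ‖v'‖ = 1 ∧ v' ∈ M.direction ∧
      (j ∈ S → (M : Set E) ∩ {x | inner ℝ (vv j) x ≤ cc j} = (M : Set E) ∩ eHalf v' c') := by
    intro j
    by_cases hj : j ∈ S
    · have hnej : ((M : Set E) ∩ {x | inner ℝ (vv j) x ≤ cc j}).Nonempty := by
        apply hne.mono
        rw [hX]
        exact Set.inter_subset_inter_right _ (Set.biInter_subset_of_mem hj)
      obtain ⟨v', c', h1, h2, h3⟩ := exists_normalize M hp hu hu1 (vv j) (cc j) hnej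
      exact ⟨v', c', h1, h2, fun _ => h3⟩
    · exact ⟨u, ⊤, hu1, hu, fun h => absurd h hj⟩
  choose nv nc hnv1 hnvM hrel using hnorm
  set e := S.orderIsoOfFin rfl with he
  refine ⟨fun i => if h : (i : ℕ) < S.card then nv (e ⟨i, h⟩) else u,
    fun i => if h : (i : ℕ) < S.card then nc (e ⟨i, h⟩) else ⊤, ?_, ?_, ?_⟩
  · intro i; dsimp only; split
    · exact hnv1 _
    · exact hu1
  · intro i; dsimp only; split
    · exact hnvM _
    · exact hu
  · have step1 : X = (M : Set E) ∩ ⋂ j ∈ S, eHalf (nv j) (nc j) := by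
      rw [hX]
      ext x
      simp only [Set.mem_inter_iff, Set.mem_iInter]
      constructor
      · rintro ⟨hxM, hj⟩
        refine ⟨hxM, fun j hjS => ?_⟩
        have := (hrel j hjS)
        have hx2 : x ∈ (M : Set E) ∩ {x | inner ℝ (vv j) x ≤ cc j} := ⟨hxM, hj j hjS⟩
        rw [this] at hx2
        exact hx2.2
      · rintro ⟨hxM, hj⟩
        refine ⟨hxM, fun j hjS => ?_⟩
        have := (hrel j hjS)
        have hx2 : x ∈ (M : Set E) ∩ eHalf (nv j) (nc j) := ⟨hxM, hj j hjS⟩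
        rw [← this] at hx2
        exact hx2.2
    rw [step1]
    congr 1
    ext x
    simp only [Set.mem_iInter]
    constructor
    · intro h i
      by_cases hi : (i : ℕ) < S.card
      · rw [dif_pos hi, dif_pos hi]
        exact h _ (e ⟨(i : ℕ), hi⟩).2
      · rw [dif_neg hi, dif_neg hi, eHalf_top]; trivial
    · intro h j hjS
      set idx := e.symm ⟨j, hjS⟩ with hidx
      have hiN : (idx : ℕ) < N' := lt_of_lt_of_le idx.2 hcard
      have h2 := h ⟨(idx : ℕ), hiN⟩
      have hlt : ((⟨(idx : ℕ), hiN⟩ : Fin N') : ℕ) < S.card := idx.2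
      rw [dif_pos hlt, dif_pos hlt] at h2
      have h3 : e ⟨((⟨(idx : ℕ), hiN⟩ : Fin N') : ℕ), hlt⟩ = ⟨j, hjS⟩ := by
        have h4 : (⟨((⟨(idx : ℕ), hiN⟩ : Fin N') : ℕ), hlt⟩ : Fin S.card) = idx := by
          apply Fin.ext; rfl
        rw [h4, hidx]
        exact e.apply_symm_apply _
      rw [h3] at h2
      exact h2

lemma assemble [FiniteDimensional ℝ E] {N mM N' : ℕ} (hN : mM + N' ≤ N)
    (M : AffineSubspace ℝ E) (G : Fin mM → Set E) (hG : ∀ i, IsClosedHalfspaceOrUniv (G i))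
    (hGM : (⋂ i, G i) = (M : Set E))
    (D : ℕ → Set E) (hmono : Monotone D) (hne : (D 0).Nonempty)
    (hspan : affineSpan ℝ (⋃ k, D k) = M)
    (pres : ∀ k, ∃ (v : Fin N' → E) (c : Fin N' → EReal), (∀ j, ‖v j‖ = 1) ∧
      (∀ j, v j ∈ M.direction) ∧ D k = (M : Set E) ∩ ⋂ j, eHalf (v j) (c j)) :
    ∃ H : Fin N → Set E, (∀ j, IsClosedHalfspaceOrUniv (H j)) ∧
      closure (⋃ k, D k) = ⋂ j, H j := by
  choose v c hv1 hvM hD using pres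
  obtain ⟨w, γ, hw1, hγ, hcl⟩ := core M D hmono hne hspan v c hv1 hvM hD
  exact concat_pad hN G (fun j => eHalf (w j) (γ j)) hG
    (fun j => isClosedHalfspaceOrUniv_eHalf (hw1 j) (hγ j)) _ (by rw [hcl, hGM])
theorem stmt_7 {n N : ℕ} (C : ℕ → Set (EuclideanSpace ℝ (Fin n)))
    (hmono : ∀ i, C i ⊆ C (i + 1))
    (hconv : ∀ i, Convex ℝ (C i))
    (hpoly : ∀ i, ∃ H : Fin N → Set (EuclideanSpace ℝ (Fin n)),
      (∀ j, IsClosedHalfspaceOrUniv (H j)) ∧ C i = ⋂ j, H j) :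
    ∃ H : Fin N → Set (EuclideanSpace ℝ (Fin n)),
      (∀ j, IsClosedHalfspaceOrUniv (H j)) ∧
      closure (⋃ i, C i) = ⋂ j, H j := by
  classical
  by_cases hex : ∃ i, (C i).Nonempty
  swap
  · push_neg at hex
    obtain ⟨H, hH, hC0⟩ := hpoly 0
    refine ⟨H, hH, ?_⟩
    have h1 : (⋃ i, C i) = ∅ := Set.iUnion_eq_empty.2 hex
    rw [h1, closure_empty, ← hC0, hex 0]
  obtain ⟨i₁, hne₁⟩ := hex
  have hmonoC : Monotone C := monotone_nat_of_le_succ hmono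
  set g : ℕ → ℕ := fun k => finrank ℝ (affineSpan ℝ (C k)).direction with hg
  have hgmono : Monotone g := by
    intro a b hab
    exact Submodule.finrank_mono (AffineSubspace.direction_le (affineSpan_mono ℝ (hmonoC hab)))
  have hgbdd : BddAbove (Set.range g) := by
    refine ⟨n, ?_⟩
    rintro y ⟨k, rfl⟩
    calc g k ≤ finrank ℝ (EuclideanSpace ℝ (Fin n)) := Submodule.finrank_le _
      _ = n := finrank_euclideanSpace_fin
  have hgne : (Set.range g).Nonempty := ⟨g 0, 0, rfl⟩
  obtain ⟨k₂, hk₂⟩ := Nat.sSup_mem hgne hgbdd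
  set i₀ := max i₁ k₂ with hi₀
  set M := affineSpan ℝ (C i₀) with hM
  obtain ⟨x₁, hx₁⟩ := hne₁
  have hp₁ : x₁ ∈ C i₀ := hmonoC (le_max_left _ _) hx₁
  have hp : x₁ ∈ M := subset_affineSpan ℝ _ hp₁
  have hMk : ∀ k, affineSpan ℝ (C (i₀ + k)) = M := by
    intro k
    have hle : M ≤ affineSpan ℝ (C (i₀ + k)) := affineSpan_mono ℝ (hmonoC (Nat.le_add_right _ _))
    have hfr : g (i₀ + k) ≤ g i₀ := by
      have h1 : g (i₀ + k) ≤ sSup (Set.range g) := le_csSup hgbdd ⟨i₀ + k, rfl⟩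
      have h2 : sSup (Set.range g) = g k₂ := hk₂.symm
      have h3 : g k₂ ≤ g i₀ := hgmono (le_max_right _ _)
      omega
    have hdir : M.direction = (affineSpan ℝ (C (i₀ + k))).direction :=
      Submodule.eq_of_le_of_finrank_le (AffineSubspace.direction_le hle) hfr
    exact (AffineSubspace.ext_of_direction_eq hdir
      ⟨x₁, hp, subset_affineSpan ℝ _ (hmonoC (Nat.le_add_right _ _) hp₁)⟩).symm
  set D : ℕ → Set (EuclideanSpace ℝ (Fin n)) := fun k => C (i₀ + k) with hD
  have hDmono : Monotone D := fun a b hab => hmonoC (by omega)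
  have hDne : (D 0).Nonempty := ⟨x₁, hp₁⟩
  have hUeq : (⋃ k, D k) = ⋃ i, C i := by
    apply subset_antisymm
    · exact Set.iUnion_subset fun k => Set.subset_iUnion C (i₀ + k)
    · exact Set.iUnion_subset fun i =>
        (hmonoC (Nat.le_add_left i i₀)).trans (Set.subset_iUnion D i)
  have hspanU : affineSpan ℝ (⋃ k, D k) = M := by
    apply le_antisymm
    · rw [affineSpan_le]
      apply Set.iUnion_subset
      intro k
      have := subset_affineSpan ℝ (C (i₀ + k))
      rw [hMk k] at this
      exact this
    · have h1 : M = affineSpan ℝ (D 0) := by rw [hD]; exact (hMk 0).symm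
      rw [h1]
      exact affineSpan_mono ℝ (Set.subset_iUnion D 0)
  have hrep : ∀ k, ∃ (v : Fin N → EuclideanSpace ℝ (Fin n)) (c : Fin N → ℝ),
      D k = ⋂ j, {x | inner ℝ (v j) x ≤ c j} := by
    intro k
    obtain ⟨H, hH, hCk⟩ := hpoly (i₀ + k)
    choose v c hvc using fun j => rep_of_isClosedHalfspaceOrUniv (hH j)
    exact ⟨v, c, by rw [hD]; dsimp only; rw [hCk]; exact Set.iInter_congr hvc⟩
  choose vv cc hvcc using hrep
  have hASk : ∀ k, affineSpan ℝ (⋂ j, {x | inner ℝ (vv k j) x ≤ cc k j}) = M := by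
    intro k
    rw [← hvcc k]
    exact hMk k
  have hnek : ∀ k, (⋂ j, {x | inner ℝ (vv k j) x ≤ cc k j}).Nonempty := by
    intro k
    rw [← hvcc k]
    exact hDne.mono (hDmono (Nat.zero_le k))
  by_cases hd0 : finrank ℝ M.direction = 0
  · -- M is a single point
    have hMdirbot : M.direction = ⊥ := Submodule.finrank_eq_zero.1 hd0
    have hMset : (M : Set (EuclideanSpace ℝ (Fin n))) = {x₁} := by
      ext q
      constructor
      · intro hq
        have := AffineSubspace.vsub_mem_direction hq hp
        rw [hMdirbot, Submodule.mem_bot, vsub_eq_sub, sub_eq_zero] at this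
        exact this
      · rintro rfl; exact hp
    have hUsing : (⋃ i, C i) = {x₁} := by
      apply subset_antisymm
      · rw [← hUeq]
        apply Set.iUnion_subset
        intro k
        have h1 : D k ⊆ (M : Set (EuclideanSpace ℝ (Fin n))) := by
          have := subset_affineSpan ℝ (C (i₀ + k))
          rw [hMk k] at this
          exact this
        rw [hMset] at h1
        exact h1
      · intro q hq
        rw [Set.mem_singleton_iff] at hq
        subst hq
        exact Set.mem_iUnion.2 ⟨i₁, hx₁⟩
    have hclos : closure (⋃ i, C i) = (M : Set (EuclideanSpace ℝ (Fin n))) := by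
      rw [hUsing, closure_singleton, hMset]
    by_cases hMtop : M = ⊤
    · refine ⟨fun _ => Set.univ, fun _ => Or.inl rfl, ?_⟩
      rw [hclos, hMtop]
      simp
    · obtain ⟨S, hScard, _⟩ := L1 (vv 0) (cc 0) (hnek 0) (by rw [hASk 0]; exact hMtop)
      rw [hASk 0] at hScard
      obtain ⟨G, hG, hGM⟩ := L2 M ⟨x₁, hp⟩
      have hab : (finrank ℝ (M.directionᗮ) + 1) + 0 ≤ N := by omega
      refine concat_pad (N := N) (a := finrank ℝ (M.directionᗮ) + 1) (b := 0)
        hab G (fun i => i.elim0) hG (fun i => i.elim0) _ ?_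
      rw [hclos, hGM]
      rw [Set.iInter_of_empty]
      rw [Set.inter_univ]
  · -- positive-dimensional case
    have hdirne : M.direction ≠ ⊥ := by
      intro h
      rw [h] at hd0
      exact hd0 (finrank_bot ℝ (EuclideanSpace ℝ (Fin n)))
    obtain ⟨u₀, hu₀M, hu₀0⟩ := Submodule.exists_mem_ne_zero_of_ne_bot hdirne
    have hu₀pos : (0:ℝ) < ‖u₀‖ := norm_pos_iff.mpr hu₀0
    set u : EuclideanSpace ℝ (Fin n) := ‖u₀‖⁻¹ • u₀ with hu
    have huM : u ∈ M.direction := M.direction.smul_mem _ hu₀M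
    have hu1 : ‖u‖ = 1 := by
      rw [hu, norm_smul, norm_inv, norm_norm, inv_mul_cancel₀ hu₀pos.ne']
    by_cases hMtop : M = ⊤
    · -- full-dimensional: use all N constraints
      have hpres : ∀ k, ∃ (v : Fin N → EuclideanSpace ℝ (Fin n)) (c : Fin N → EReal),
          (∀ j, ‖v j‖ = 1) ∧ (∀ j, v j ∈ M.direction) ∧
          D k = (M : Set (EuclideanSpace ℝ (Fin n))) ∩ ⋂ j, eHalf (v j) (c j) := by
        intro k
        apply enum_normalize M hp huM hu1 (vv k) (cc k) Finset.univ
          (by rw [Finset.card_univ, Fintype.card_fin])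
        · rw [hvcc k]
          have h1 : (M : Set (EuclideanSpace ℝ (Fin n))) = Set.univ := by
            rw [hMtop]; rfl
          rw [h1, Set.univ_inter]
          ext x
          simp
        · exact hDne.mono (hDmono (Nat.zero_le k))
      obtain ⟨H, hH, hcl⟩ := assemble (mM := 0) (N' := N) (le_of_eq (Nat.zero_add N)) M
        (fun i => i.elim0) (fun i => i.elim0)
        (by rw [Set.iInter_of_empty, hMtop]; rfl)
        D hDmono hDne hspanU hpres
      exact ⟨H, hH, by rw [← hUeq]; exact hcl⟩
    · -- proper affine subspace
      set mM := finrank ℝ (M.directionᗮ) + 1 with hmM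
      have hL1 : ∀ k, ∃ S : Finset (Fin N), S.card + mM ≤ N ∧
          D k = (M : Set (EuclideanSpace ℝ (Fin n))) ∩
            ⋂ j ∈ S, {x | inner ℝ (vv k j) x ≤ cc k j} := by
        intro k
        obtain ⟨S, hScard, hSeq⟩ := L1 (vv k) (cc k) (hnek k) (by rw [hASk k]; exact hMtop)
        rw [hASk k] at hScard hSeq
        refine ⟨S, hScard, ?_⟩
        rw [hvcc k]
        exact hSeq
      choose Sk hSkcard hSkeq using hL1
      have hmMN : mM ≤ N := le_trans (Nat.le_add_left mM (Sk 0).card) (hSkcard 0)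
      set N' := N - mM with hN'
      have hpres : ∀ k, ∃ (v : Fin N' → EuclideanSpace ℝ (Fin n)) (c : Fin N' → EReal),
          (∀ j, ‖v j‖ = 1) ∧ (∀ j, v j ∈ M.direction) ∧
          D k = (M : Set (EuclideanSpace ℝ (Fin n))) ∩ ⋂ j, eHalf (v j) (c j) := by
        intro k
        apply enum_normalize M hp huM hu1 (vv k) (cc k) (Sk k)
          (by have := hSkcard k; omega)
        · exact hSkeq k
        · exact hDne.mono (hDmono (Nat.zero_le k))
      obtain ⟨G, hG, hGM⟩ := L2 M ⟨x₁, hp⟩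
      have hab : mM + N' ≤ N := by omega
      obtain ⟨H, hH, hcl⟩ := assemble (mM := mM) (N' := N') hab M G hG hGM
        D hDmono hDne hspanU hpres
      exact ⟨H, hH, by rw [← hUeq]; exact hcl⟩
end

section
/- Let X be a complete metric space and let (Cᵢ) be an increasing sequence of closed subsets of X, each isometric to a convex subset of ℝᵏ via isometries that are compatible (the isometry on Cᵢ₊₁ restricts, up to a Euclidean isometry, to the one on Cᵢ). Then the closure of ⋃ᵢ Cᵢ is isometric to a closed convex subset of ℝᵏ. -/
open Set

set_option maxHeartbeats 1000000 in
theorem stmt_12 {X : Type*} [MetricSpace X] [CompleteSpace X] {k : ℕ}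
    (C : ℕ → Set X) (hmono : ∀ i, C i ⊆ C (i + 1))
    (hclosed : ∀ i, IsClosed (C i))
    (φ : ℕ → X → EuclideanSpace ℝ (Fin k))
    -- each `φ i` is an isometry from `C i` onto a convex subset of `ℝᵏ`
    (hiso : ∀ i, ∀ a ∈ C i, ∀ b ∈ C i, dist (φ i a) (φ i b) = dist a b)
    (hconv : ∀ i, Convex ℝ (φ i '' C i))
    -- the isometries are compatible up to rigid motions of `ℝᵏ`
    (hcompat : ∀ i, ∃ g : EuclideanSpace ℝ (Fin k) ≃ᵢ EuclideanSpace ℝ (Fin k),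
      ∀ a ∈ C i, φ (i + 1) a = g (φ i a)) :
    ∃ K : Set (EuclideanSpace ℝ (Fin k)), IsClosed K ∧ Convex ℝ K ∧
      Nonempty ((closure (⋃ i, C i)) ≃ᵢ K) := by
  classical
  choose g hg using hcompat
  -- cumulative rigid motions
  let G : ℕ → (EuclideanSpace ℝ (Fin k) ≃ᵢ EuclideanSpace ℝ (Fin k)) := fun n =>
    Nat.rec (IsometryEquiv.refl _) (fun i Gi => (g i).symm.trans Gi) n
  -- the adjusted isometries
  let ψ : ℕ → X → EuclideanSpace ℝ (Fin k) := fun i x => G i (φ i x)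
  have hψsucc : ∀ i, ∀ a ∈ C i, ψ (i + 1) a = ψ i a := by
    intro i a ha
    show G i ((g i).symm (φ (i + 1) a)) = G i (φ i a)
    rw [hg i a ha, IsometryEquiv.symm_apply_apply]
  have hCmono : ∀ {i j : ℕ}, i ≤ j → C i ⊆ C j := by
    intro i j h
    induction h with
    | refl => exact subset_rfl
    | step _ ih => exact ih.trans (hmono _)
  have hψle : ∀ {i j : ℕ}, i ≤ j → ∀ a ∈ C i, ψ j a = ψ i a := by
    intro i j h a ha
    induction h with
    | refl => rfl
    | @step m h ih => rw [hψsucc m a (hCmono h ha), ih]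
  have hψdist : ∀ i, ∀ a ∈ C i, ∀ b ∈ C i, dist (ψ i a) (ψ i b) = dist a b := by
    intro i a ha b hb
    show dist (G i (φ i a)) (G i (φ i b)) = dist a b
    rw [(G i).dist_eq, hiso i a ha b hb]
  -- the global map
  let Ψ : X → EuclideanSpace ℝ (Fin k) := fun x => if h : ∃ i, x ∈ C i then ψ (Nat.find h) x else 0
  have hΨ : ∀ i, ∀ x ∈ C i, Ψ x = ψ i x := by
    intro i x hx
    have h : ∃ j, x ∈ C j := ⟨i, hx⟩
    show dite _ _ _ = _
    rw [dif_pos h]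
    exact (hψle (Nat.find_le hx) x (Nat.find_spec h)).symm
  have hΨdist : ∀ a ∈ ⋃ i, C i, ∀ b ∈ ⋃ i, C i, dist (Ψ a) (Ψ b) = dist a b := by
    intro a ha b hb
    obtain ⟨_, ⟨i, rfl⟩, hai⟩ := ha
    obtain ⟨_, ⟨j, rfl⟩, hbj⟩ := hb
    have hai' : a ∈ C (max i j) := hCmono (le_max_left i j) hai
    have hbj' : b ∈ C (max i j) := hCmono (le_max_right i j) hbj
    rw [hΨ _ a hai', hΨ _ b hbj', hψdist _ a hai' b hbj']
  -- convexity of the image of the union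
  have hψconv : ∀ i, Convex ℝ (ψ i '' C i) := by
    intro i
    have : ψ i '' C i = (G i).toRealAffineIsometryEquiv.toAffineMap '' (φ i '' C i) := by
      rw [image_image]
      exact image_congr fun x _ => rfl
    rw [this]
    exact (hconv i).affine_image _
  have hψmono : ∀ {i j : ℕ}, i ≤ j → ψ i '' C i ⊆ ψ j '' C j := by
    intro i j h y hy
    obtain ⟨a, ha, rfl⟩ := hy
    exact ⟨a, hCmono h ha, hψle h a ha⟩
  have hΨimg : Ψ '' (⋃ i, C i) = ⋃ i, ψ i '' C i := by
    rw [image_iUnion]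
    exact iUnion_congr fun i => image_congr fun x hx => hΨ i x hx
  have hΨconv : Convex ℝ (Ψ '' (⋃ i, C i)) := by
    rw [hΨimg]
    intro x hx y hy a b ha hb hab
    obtain ⟨_, ⟨i, rfl⟩, hxi⟩ := hx
    obtain ⟨_, ⟨j, rfl⟩, hyj⟩ := hy
    have hxi' : x ∈ ψ (max i j) '' C (max i j) := hψmono (le_max_left i j) hxi
    have hyj' : y ∈ ψ (max i j) '' C (max i j) := hψmono (le_max_right i j) hyj
    exact mem_iUnion.2 ⟨max i j, hψconv (max i j) hxi' hyj' ha hb hab⟩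
  -- now extend to the closure
  let ι : (⋃ i, C i) → (closure (⋃ i, C i) : Set X) := fun x => ⟨x.1, subset_closure x.2⟩
  have hι : Isometry ι := Isometry.of_dist_eq fun x y => rfl
  have hιui : IsUniformInducing ι := hι.isUniformInducing
  have hιd : DenseRange ι := by
    intro p
    rw [closure_subtype]
    have : (Subtype.val : (closure (⋃ i, C i) : Set X) → X) '' range ι = ⋃ i, C i := by
      ext y
      constructor
      · rintro ⟨q, ⟨x, rfl⟩, rfl⟩; exact x.2
      · intro hy; exact ⟨ι ⟨y, hy⟩, ⟨⟨y, hy⟩, rfl⟩, rfl⟩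
    rw [this]
    exact p.2
  have hdi : IsDenseInducing ι := hιui.isDenseInducing hιd
  let f : (⋃ i, C i) → EuclideanSpace ℝ (Fin k) := fun x => Ψ x.1
  have hfiso : Isometry f :=
    Isometry.of_dist_eq fun x y => hΨdist x.1 x.2 y.1 y.2
  have hfu : UniformContinuous f := hfiso.uniformContinuous
  let F : (closure (⋃ i, C i) : Set X) → EuclideanSpace ℝ (Fin k) := hdi.extend f
  have hFc : Continuous F := (uniformContinuous_uniformly_extend hιui hιd hfu).continuous
  have hFι : ∀ x, F (ι x) = f x := fun x => hdi.extend_eq hfu.continuous x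
  have hFdist : ∀ p q, dist (F p) (F q) = dist p q := by
    intro p q
    obtain ⟨u, hu, hul⟩ := mem_closure_iff_seq_limit.1 p.2
    obtain ⟨v, hv, hvl⟩ := mem_closure_iff_seq_limit.1 q.2
    let pn : ℕ → (closure (⋃ i, C i) : Set X) := fun n => ι ⟨u n, hu n⟩
    let qn : ℕ → (closure (⋃ i, C i) : Set X) := fun n => ι ⟨v n, hv n⟩
    have hpn : Filter.Tendsto pn Filter.atTop (nhds p) := by
      rw [tendsto_subtype_rng]; exact hul
    have hqn : Filter.Tendsto qn Filter.atTop (nhds q) := by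
      rw [tendsto_subtype_rng]; exact hvl
    have h1 : Filter.Tendsto (fun n => dist (F (pn n)) (F (qn n))) Filter.atTop
        (nhds (dist (F p) (F q))) :=
      ((hFc.tendsto p).comp hpn).dist ((hFc.tendsto q).comp hqn)
    have h2 : (fun n => dist (F (pn n)) (F (qn n))) = fun n => dist (u n) (v n) := by
      funext n
      show dist (F (ι ⟨u n, hu n⟩)) (F (ι ⟨v n, hv n⟩)) = _
      rw [hFι, hFι]
      exact hΨdist _ (hu n) _ (hv n)
    have h3 : Filter.Tendsto (fun n => dist (u n) (v n)) Filter.atTop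
        (nhds (dist p.1 q.1)) := hul.dist hvl
    rw [h2] at h1
    rw [Subtype.dist_eq]
    exact tendsto_nhds_unique h1 h3
  have hF : Isometry F := Isometry.of_dist_eq fun p q => hFdist p q
  have hcompl : CompleteSpace (closure (⋃ i, C i) : Set X) :=
    isClosed_closure.completeSpace_coe
  have hKclosed : IsClosed (range F) := by
    have : IsComplete (range F) := by
      rw [← image_univ]
      exact (isComplete_image_iff hF.isUniformInducing).2 complete_univ
    exact this.isClosed
  have h1 : Ψ '' (⋃ i, C i) ⊆ range F := by
    rintro _ ⟨x, hx, rfl⟩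
    exact ⟨ι ⟨x, hx⟩, hFι ⟨x, hx⟩⟩
  have h2 : range F ⊆ closure (Ψ '' (⋃ i, C i)) := by
    rintro _ ⟨p, rfl⟩
    have hp : p ∈ closure (range ι) := by rw [hιd.closure_eq]; trivial
    have h3 : F '' closure (range ι) ⊆ closure (F '' range ι) :=
      image_closure_subset_closure_image hFc
    have h4 : F '' range ι = Ψ '' (⋃ i, C i) := by
      ext y
      constructor
      · rintro ⟨_, ⟨x, rfl⟩, rfl⟩; exact ⟨x.1, x.2, (hFι x).symm ▸ rfl⟩
      · rintro ⟨x, hx, rfl⟩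
        exact ⟨ι ⟨x, hx⟩, ⟨⟨x, hx⟩, rfl⟩, hFι ⟨x, hx⟩⟩
    rw [← h4]
    exact h3 (mem_image_of_mem F hp)
  have hKeq : range F = closure (Ψ '' (⋃ i, C i)) :=
    Subset.antisymm h2 (hKclosed.closure_subset_iff.2 h1)
  refine ⟨range F, hKclosed, ?_, ⟨hF.isometryEquivOnRange⟩⟩
  rw [hKeq]
  exact hΨconv.closure
end

section
/- Let f : S¹ → S¹ be a surjective 1-Lipschitz map of the round circle (circumference 2π) to itself. Then f is an isometry. -/
lemma key {X : Type*} [MetricSpace X] [CompactSpace X] (f : X → X)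
    (hsurj : Function.Surjective f) (hlip : LipschitzWith 1 f) : Isometry f := by
  have hle : ∀ x y, dist (f x) (f y) ≤ dist x y := fun x y => by
    simpa using hlip.dist_le_mul x y
  apply Isometry.of_dist_eq
  intro a b
  refine le_antisymm (hle a b) ?_
  by_contra hlt
  push_neg at hlt
  set r := dist a b with hr
  set ε := dist a b - dist (f a) (f b) with hε
  have hεpos : 0 < ε := by dsimp [ε]; linarith
  obtain ⟨g, hg⟩ := hsurj.hasRightInverse
  -- chains
  set A : ℕ → X := fun n => g^[n] a with hA
  set B : ℕ → X := fun n => g^[n] b with hB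
  have hfiter : ∀ (k n : ℕ), k ≤ n → f^[k] (g^[n] a) = g^[n - k] a := by
    intro k n hkn
    have : g^[n] a = g^[k] (g^[n-k] a) := by
      rw [← Function.iterate_add_apply, Nat.add_sub_cancel' hkn]
    rw [this, hg.iterate k _]
  have hfiterb : ∀ (k n : ℕ), k ≤ n → f^[k] (g^[n] b) = g^[n - k] b := by
    intro k n hkn
    have : g^[n] b = g^[k] (g^[n-k] b) := by
      rw [← Function.iterate_add_apply, Nat.add_sub_cancel' hkn]
    rw [this, hg.iterate k _]
  -- monotone distances
  have hmono : Monotone fun n => dist (A n) (B n) := by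
    apply monotone_nat_of_le_succ
    intro n
    have h1 : f (A (n+1)) = A n := by
      have := hfiter 1 (n+1) (by omega)
      simpa [hA] using this
    have h2 : f (B (n+1)) = B n := by
      have := hfiterb 1 (n+1) (by omega)
      simpa [hB] using this
    calc dist (A n) (B n) = dist (f (A (n+1))) (f (B (n+1))) := by rw [h1, h2]
    _ ≤ dist (A (n+1)) (B (n+1)) := hle _ _
  have hc0 : dist (A 0) (B 0) = r := by simp [hA, hB, hr]
  -- compactness: find m < n with both chains close
  obtain ⟨p, _, φ, hφ, hconv⟩ :=
    isCompact_univ.tendsto_subseq (x := fun n => (A n, B n)) (fun n => trivial)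
  have hcauchy := hconv.cauchySeq
  rw [Metric.cauchySeq_iff] at hcauchy
  obtain ⟨N, hN⟩ := hcauchy (ε/2) (by linarith)
  have hclose := hN (N+1) (by omega) N (le_refl N)
  set m := φ N with hm
  set n := φ (N+1) with hn
  have hmn : m < n := hφ (by omega)
  have hdA : dist (A n) (A m) < ε/2 := by
    have := hclose
    simp [Prod.dist_eq] at this
    exact this.1
  have hdB : dist (B n) (B m) < ε/2 := by
    have := hclose
    simp [Prod.dist_eq] at this
    exact this.2
  set k := n - m with hk
  have hkpos : 1 ≤ k := by omega
  -- apply f^[m+1]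
  have hA1 : f^[m+1] (A m) = f a := by
    have : f^[m+1] (g^[m] a) = f (f^[m] (g^[m] a)) := by
      rw [Function.iterate_succ_apply']
    rw [hA]; rw [this, hg.iterate m a]
  have hA2 : f^[m+1] (A n) = A (k-1) := by
    have h := hfiter (m+1) n (by omega)
    have : n - (m+1) = k - 1 := by omega
    rw [hA]; simp only []; rw [h, this]
  have hB1 : f^[m+1] (B m) = f b := by
    have : f^[m+1] (g^[m] b) = f (f^[m] (g^[m] b)) := by
      rw [Function.iterate_succ_apply']
    rw [hB]; rw [this, hg.iterate m b]
  have hB2 : f^[m+1] (B n) = B (k-1) := by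
    have h := hfiterb (m+1) n (by omega)
    have : n - (m+1) = k - 1 := by omega
    rw [hB]; simp only []; rw [h, this]
  have hlipiter : ∀ (j : ℕ) (x y : X), dist (f^[j] x) (f^[j] y) ≤ dist x y := by
    intro j x y
    induction j with
    | zero => simp
    | succ i ih =>
      rw [Function.iterate_succ_apply', Function.iterate_succ_apply']
      exact le_trans (hle _ _) ih
  have hfaA : dist (f a) (A (k-1)) < ε/2 := by
    calc dist (f a) (A (k-1)) = dist (f^[m+1] (A m)) (f^[m+1] (A n)) := by rw [hA1, hA2]
    _ ≤ dist (A m) (A n) := hlipiter _ _ _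
    _ < ε/2 := by rw [dist_comm]; exact hdA
  have hfbB : dist (f b) (B (k-1)) < ε/2 := by
    calc dist (f b) (B (k-1)) = dist (f^[m+1] (B m)) (f^[m+1] (B n)) := by rw [hB1, hB2]
    _ ≤ dist (B m) (B n) := hlipiter _ _ _
    _ < ε/2 := by rw [dist_comm]; exact hdB
  have hfin : dist (A (k-1)) (B (k-1)) < r := by
    calc dist (A (k-1)) (B (k-1)) ≤ dist (A (k-1)) (f a) + dist (f a) (f b) + dist (f b) (B (k-1)) :=
      dist_triangle4 _ _ _ _
    _ < ε/2 + (r - ε) + ε/2 := by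
        rw [dist_comm (A (k-1)) (f a)]
        have : dist (f a) (f b) = r - ε := by dsimp [ε, r]; ring
        linarith [hfaA, hfbB, this.le, this.ge]
    _ = r := by ring
  have h0 := hmono (Nat.zero_le (k-1))
  simp only at h0
  rw [hc0] at h0
  linarith

/-- A surjective 1-Lipschitz self-map of the round circle of circumference `2π`
(with its intrinsic arc-length metric) is an isometry. -/
theorem stmt_13 (f : AddCircle (2 * Real.pi) → AddCircle (2 * Real.pi))
    (hsurj : Function.Surjective f) (hlip : LipschitzWith 1 f) :
    Isometry f := by
  haveI : Fact (0 < 2 * Real.pi) := ⟨by positivity⟩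
  exact key f hsurj hlip
end

section
/- Let f : X → Y be a surjective 1-Lipschitz map between metric spaces of diameter exactly π, and assume that for every y ∈ Y there exists ȳ ∈ Y with d(y, ȳ) = π, and that X is geodesic. Then for every x ∈ X and every ε > 0 there exists x̄ ∈ X with d(x, x̄) = π such that f restricted to any geodesic from x to x̄ is an isometric embedding. -/
open Set

/-- `γ` is a (unit-speed) geodesic from `a` to `b` in a metric space. -/
def IsGeodesicFromTo {T : Type*} [MetricSpace T] (γ : ℝ → T) (a b : T) : Prop :=
  γ 0 = a ∧ γ (dist a b) = b ∧
    ∀ s ∈ Icc (0:ℝ) (dist a b), ∀ t ∈ Icc (0:ℝ) (dist a b),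
      dist (γ s) (γ t) = |s - t|

theorem stmt_14 {X Y : Type*} [MetricSpace X] [MetricSpace Y]
    (f : X → Y) (hsurj : Function.Surjective f) (hlip : LipschitzWith 1 f)
    (hdiamX : Metric.diam (univ : Set X) = Real.pi)
    (hdiamY : Metric.diam (univ : Set Y) = Real.pi)
    -- every point of `Y` has an antipode at distance `π`
    (hant : ∀ y : Y, ∃ ybar : Y, dist y ybar = Real.pi)
    -- `X` is geodesic
    (hgeo : ∀ a b : X, ∃ γ : ℝ → X, IsGeodesicFromTo γ a b) :
    ∀ x : X, ∀ ε > (0:ℝ), ∃ xbar : X, dist x xbar = Real.pi ∧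
      ∀ γ : ℝ → X, IsGeodesicFromTo γ x xbar →
        ∀ s ∈ Icc (0:ℝ) Real.pi, ∀ t ∈ Icc (0:ℝ) Real.pi,
          dist (f (γ s)) (f (γ t)) = |s - t| := by
  intro x ε hε
  obtain ⟨ybar, hybar⟩ := hant (f x)
  obtain ⟨xbar, hxbar⟩ := hsurj ybar
  have hlipd : ∀ a b : X, dist (f a) (f b) ≤ dist a b := by
    intro a b
    have := hlip.dist_le_mul a b
    simpa using this
  have hbdd : Bornology.IsBounded (univ : Set X) := by
    by_contra h
    have : Metric.diam (univ : Set X) = 0 := Metric.diam_eq_zero_of_unbounded h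
    rw [this] at hdiamX
    exact Real.pi_ne_zero hdiamX.symm
  have hle : dist x xbar ≤ Real.pi := by
    rw [← hdiamX]
    exact Metric.dist_le_diam_of_mem hbdd (mem_univ _) (mem_univ _)
  have hge : Real.pi ≤ dist x xbar := by
    calc Real.pi = dist (f x) (f xbar) := by rw [hxbar, hybar]
    _ ≤ dist x xbar := hlipd x xbar
  have hdx : dist x xbar = Real.pi := le_antisymm hle hge
  refine ⟨xbar, hdx, ?_⟩
  intro γ hγ
  unfold IsGeodesicFromTo at hγ
  rw [hdx] at hγ
  obtain ⟨h0, hπ, hiso⟩ := hγ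
  -- key symmetric lemma
  have key : ∀ s ∈ Icc (0:ℝ) Real.pi, ∀ t ∈ Icc (0:ℝ) Real.pi, s ≤ t →
      dist (f (γ s)) (f (γ t)) = |s - t| := by
    intro s hs t ht hst
    have hle' : dist (f (γ s)) (f (γ t)) ≤ |s - t| := by
      calc dist (f (γ s)) (f (γ t)) ≤ dist (γ s) (γ t) := hlipd _ _
      _ = |s - t| := hiso s hs t ht
    have hd1 : dist (f (γ 0)) (f (γ s)) ≤ s := by
      have := hlipd (γ 0) (γ s)
      rw [hiso 0 (by constructor <;> [rfl; exact Real.pi_pos.le] ) s hs] at this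
      calc dist (f (γ 0)) (f (γ s)) ≤ |0 - s| := this
      _ = s := by rw [abs_sub_comm]; simpa using abs_of_nonneg hs.1
    have hd2 : dist (f (γ t)) (f (γ Real.pi)) ≤ Real.pi - t := by
      have := hlipd (γ t) (γ Real.pi)
      rw [hiso t ht Real.pi ⟨Real.pi_pos.le, le_refl _⟩] at this
      calc dist (f (γ t)) (f (γ Real.pi)) ≤ |t - Real.pi| := this
      _ = Real.pi - t := by rw [abs_sub_comm]; exact abs_of_nonneg (by linarith [ht.2])
    have htri : Real.pi ≤ dist (f (γ 0)) (f (γ s)) + dist (f (γ s)) (f (γ t))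
        + dist (f (γ t)) (f (γ Real.pi)) := by
      calc Real.pi = dist (f (γ 0)) (f (γ Real.pi)) := by rw [h0, hπ, hxbar, hybar]
      _ ≤
            dist (f (γ 0)) (f (γ t)) + dist (f (γ t)) (f (γ Real.pi)) := dist_triangle _ _ _
      _ ≤ dist (f (γ 0)) (f (γ s)) + dist (f (γ s)) (f (γ t))
          + dist (f (γ t)) (f (γ Real.pi)) := by
            have := dist_triangle (f (γ 0)) (f (γ s)) (f (γ t))
            linarith
    have hge' : t - s ≤ dist (f (γ s)) (f (γ t)) := by linarith
    have habs : |s - t| = t - s := by rw [abs_sub_comm]; exact abs_of_nonneg (by linarith)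
    rw [habs]; exact le_antisymm (habs ▸ hle') hge'
  intro s hs t ht
  rcases le_total s t with h | h
  · exact key s hs t ht h
  · rw [dist_comm, abs_sub_comm]; exact key t ht s hs h
end
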